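/- arXiv:2104.09618 — 4 statements merged into one kernel-verified Lean document; each statement's English description precedes it below -/
import Mathlib

section
/- Let H be a symmetric positive semi-definite d×d real matrix whose largest eigenvalue λ₁ > 0 is simple, and let q ∈ ℝ^d be a unit eigenvector with Hq = λ₁q. Let v : [0,∞) → ℝ^d be differentiable with ‖v(t)‖ = 1 for all t ≥ 0 and satisfy the Oja PCA flow v̇(t) = (I − v(t)v(t)ᵀ)Hv(t). If −1 ≤ ⟨q, v(0)⟩ < 0, then v(t) → −q as t → ∞. -/
open Matrix Filter
open scoped InnerProductSpace

/-- Right-hand side of the Oja PCA flow `v̇ = (I - v vᵀ) M v` on `ℝ^d`. -/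
noncomputable def ojaRHS {d : ℕ} (M : Matrix (Fin d) (Fin d) ℝ)
    (x : EuclideanSpace ℝ (Fin d)) : EuclideanSpace ℝ (Fin d) :=
  WithLp.toLp 2 (((1 - Matrix.vecMulVec x x) * M) *ᵥ x)

variable {d : ℕ}

/-- `mulVec` as a map on EuclideanSpace. -/
def mulVecE (H : Matrix (Fin d) (Fin d) ℝ) (x : EuclideanSpace ℝ (Fin d)) :
    EuclideanSpace ℝ (Fin d) := WithLp.toLp 2 (H *ᵥ x)

lemma inner_eq_dot (x y : EuclideanSpace ℝ (Fin d)) : ⟪x, y⟫_ℝ = x ⬝ᵥ y := by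
  simp [PiLp.inner_apply, dotProduct, RCLike.inner_apply, mul_comm]

lemma inner_mulVec_symm (H : Matrix (Fin d) (Fin d) ℝ) (hH : Hᵀ = H)
    (x y : EuclideanSpace ℝ (Fin d)) :
    ⟪x, mulVecE H y⟫_ℝ = ⟪mulVecE H x, y⟫_ℝ := by
  rw [inner_eq_dot, inner_eq_dot]
  show x ⬝ᵥ (H *ᵥ y) = (H *ᵥ x) ⬝ᵥ y
  rw [dotProduct_mulVec, ← mulVec_transpose, hH]

lemma vecMulVec_mulVec' (x y : Fin d → ℝ) : Matrix.vecMulVec x x *ᵥ y = (x ⬝ᵥ y) • x := by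
  funext i
  simp only [Matrix.mulVec, Matrix.vecMulVec_apply, dotProduct, Pi.smul_apply, smul_eq_mul,
    Finset.sum_mul, Finset.mul_sum]
  exact Finset.sum_congr rfl fun j _ => by ring

lemma oja_eq (H : Matrix (Fin d) (Fin d) ℝ) (x : EuclideanSpace ℝ (Fin d)) :
    ojaRHS H x = mulVecE H x - ⟪x, mulVecE H x⟫_ℝ • x := by
  show WithLp.toLp 2 (((1 - Matrix.vecMulVec x x) * H) *ᵥ x) = _
  rw [Matrix.sub_mul, Matrix.one_mul, Matrix.sub_mulVec, ← Matrix.mulVec_mulVec,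
    vecMulVec_mulVec', inner_eq_dot]
  rfl

lemma rayleigh_expand (H : Matrix (Fin d) (Fin d) ℝ) (hH : H.IsHermitian)
    (x : EuclideanSpace ℝ (Fin d)) :
    ⟪x, mulVecE H x⟫_ℝ
      = ∑ i, hH.eigenvalues i * ⟪hH.eigenvectorBasis i, x⟫_ℝ ^ 2 := by
  have hsymmT : Hᵀ = H := by
    rw [← Matrix.conjTranspose_eq_transpose_of_trivial]; exact hH.eq
  rw [← hH.eigenvectorBasis.sum_inner_mul_inner x (mulVecE H x)]
  refine Finset.sum_congr rfl fun i _ => ?_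
  have h1 : ⟪hH.eigenvectorBasis i, mulVecE H x⟫_ℝ
      = hH.eigenvalues i * ⟪hH.eigenvectorBasis i, x⟫_ℝ := by
    rw [inner_mulVec_symm H hsymmT]
    have : mulVecE H (hH.eigenvectorBasis i) = hH.eigenvalues i • hH.eigenvectorBasis i := by
      have := hH.mulVec_eigenvectorBasis i
      ext j; exact congrFun this j
    rw [this, real_inner_smul_left]
  rw [h1, real_inner_comm x]
  ring

lemma norm_sq_expand (x : EuclideanSpace ℝ (Fin d)) (b : OrthonormalBasis (Fin d) ℝ (EuclideanSpace ℝ (Fin d))) :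
    ‖x‖ ^ 2 = ∑ i, ⟪b i, x⟫_ℝ ^ 2 := by
  have := b.sum_inner_mul_inner x x
  rw [real_inner_self_eq_norm_sq] at this
  rw [← this]
  exact Finset.sum_congr rfl fun i _ => by rw [real_inner_comm x]; ring

lemma eigE (H : Matrix (Fin d) (Fin d) ℝ) (hH : H.IsHermitian) (i : Fin d) :
    mulVecE H (hH.eigenvectorBasis i) = hH.eigenvalues i • hH.eigenvectorBasis i := by
  ext j; exact congrFun (hH.mulVec_eigenvectorBasis i) j

lemma gap_bound (H : Matrix (Fin d) (Fin d) ℝ) (hH : H.PosSemidef)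
    (lam1 : ℝ) (hlam1 : 0 < lam1)
    (q : EuclideanSpace ℝ (Fin d))
    (hmax : ∀ (μ : ℝ) (w : EuclideanSpace ℝ (Fin d)), w ≠ 0 → mulVecE H w = μ • w → μ ≤ lam1)
    (hsimple : ∀ w : EuclideanSpace ℝ (Fin d), mulVecE H w = lam1 • w → ∃ c : ℝ, w = c • q) :
    ∃ lam2 : ℝ, 0 ≤ lam2 ∧ lam2 < lam1 ∧
      (∀ x : EuclideanSpace ℝ (Fin d), ⟪x, mulVecE H x⟫_ℝ ≤ lam1 * ‖x‖ ^ 2) ∧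
      (∀ w : EuclideanSpace ℝ (Fin d), ⟪q, w⟫_ℝ = 0 →
        ⟪w, mulVecE H w⟫_ℝ ≤ lam2 * ‖w‖ ^ 2) := by
  set μ := hH.1.eigenvalues with hμ
  set e := hH.1.eigenvectorBasis with he
  have hμle : ∀ i, μ i ≤ lam1 := fun i =>
    hmax (μ i) (e i) (e.orthonormal.ne_zero i) (eigE H hH.1 i)
  have hμ0 : ∀ i, 0 ≤ μ i := hH.eigenvalues_nonneg
  -- coefficients vanish on the λ₁-eigenspace directions for w ⊥ q
  have hperp : ∀ i, μ i = lam1 → ∀ w : EuclideanSpace ℝ (Fin d), ⟪q, w⟫_ℝ = 0 →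
      ⟪e i, w⟫_ℝ = 0 := by
    intro i hi w hw
    obtain ⟨c, hc⟩ := hsimple (e i) (by
      rw [eigE H hH.1 i]; simp only [← hμ, ← he]; rw [hi])
    rw [hc, real_inner_smul_left, hw, mul_zero]
  set S : Finset (Fin d) := Finset.univ.filter (fun i => μ i ≠ lam1) with hS
  by_cases hne : S.Nonempty
  · refine ⟨S.sup' hne μ, ?_, ?_, ?_, ?_⟩
    · obtain ⟨i, hi⟩ := hne
      exact le_trans (hμ0 i) (Finset.le_sup' μ hi)
    · rw [Finset.sup'_lt_iff]
      intro i hi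
      exact lt_of_le_of_ne (hμle i) (by simpa [hS] using hi)
    · intro x
      rw [rayleigh_expand H hH.1 x, norm_sq_expand x e, Finset.mul_sum]
      exact Finset.sum_le_sum fun i _ =>
        mul_le_mul_of_nonneg_right (hμle i) (sq_nonneg _)
    · intro w hw
      rw [rayleigh_expand H hH.1 w, norm_sq_expand w e, Finset.mul_sum]
      refine Finset.sum_le_sum fun i _ => ?_
      by_cases his : i ∈ S
      · exact mul_le_mul_of_nonneg_right (Finset.le_sup' μ his) (sq_nonneg _)
      · have : μ i = lam1 := by simpa [hS] using his
        rw [hperp i this w hw]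
        simp
  · refine ⟨lam1 / 2, by linarith, by linarith, ?_, ?_⟩
    · intro x
      rw [rayleigh_expand H hH.1 x, norm_sq_expand x e, Finset.mul_sum]
      exact Finset.sum_le_sum fun i _ =>
        mul_le_mul_of_nonneg_right (hμle i) (sq_nonneg _)
    · intro w hw
      rw [rayleigh_expand H hH.1 w, norm_sq_expand w e, Finset.mul_sum]
      refine Finset.sum_le_sum fun i _ => ?_
      have : μ i = lam1 := by
        by_contra h
        exact hne ⟨i, by simp [hS, h]⟩
      rw [hperp i this w hw]
      simp

lemma mulVecE_eq_lin (H : Matrix (Fin d) (Fin d) ℝ) (x : EuclideanSpace ℝ (Fin d)) :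
    mulVecE H x = Matrix.toEuclideanLin H x := (Matrix.toEuclideanLin_apply H x).symm

lemma mulVecE_add (H : Matrix (Fin d) (Fin d) ℝ) (x y : EuclideanSpace ℝ (Fin d)) :
    mulVecE H (x + y) = mulVecE H x + mulVecE H y := by
  simp [mulVecE_eq_lin]

lemma mulVecE_smul (H : Matrix (Fin d) (Fin d) ℝ) (c : ℝ) (x : EuclideanSpace ℝ (Fin d)) :
    mulVecE H (c • x) = c • mulVecE H x := by
  simp [mulVecE_eq_lin]

/-- If `H` is symmetric positive semi-definite with simple largest eigenvalue
`λ₁ > 0` and unit eigenvector `q`, any unit-norm solution of the Oja PCA flow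
with `-1 ≤ ⟨q, v(0)⟩ < 0` converges to `-q`. -/
theorem stmt1 {d : ℕ} (H : Matrix (Fin d) (Fin d) ℝ) (hH : H.PosSemidef)
    (lam1 : ℝ) (hlam1 : 0 < lam1)
    (q : EuclideanSpace ℝ (Fin d)) (hq : ‖q‖ = 1)
    (heig : H *ᵥ q = lam1 • q)
    (hmax : ∀ (μ : ℝ) (w : EuclideanSpace ℝ (Fin d)), w ≠ 0 → H *ᵥ w = μ • w → μ ≤ lam1)
    (hsimple : ∀ w : EuclideanSpace ℝ (Fin d), H *ᵥ w = lam1 • w → ∃ c : ℝ, w = c • q)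
    (v : ℝ → EuclideanSpace ℝ (Fin d))
    (hnorm : ∀ t : ℝ, 0 ≤ t → ‖v t‖ = 1)
    (hode : ∀ t : ℝ, 0 ≤ t → HasDerivAt v (ojaRHS H (v t)) t)
    (h0ge : -1 ≤ ⟪q, v 0⟫_ℝ) (h0neg : ⟪q, v 0⟫_ℝ < 0) :
    Tendsto v atTop (nhds (-q)) := by
  have hqE : mulVecE H q = lam1 • q := congrArg (WithLp.toLp 2) heig
  have hsymmT : Hᵀ = H := by
    rw [← Matrix.conjTranspose_eq_transpose_of_trivial]; exact hH.1.eq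
  obtain ⟨lam2, hlam2_0, hlam2_lt, hrayleigh, hgap⟩ :=
    gap_bound H hH lam1 hlam1 q (fun μ w hw hEq => hmax μ w hw (congrArg WithLp.ofLp hEq))
      (fun w hEq => hsimple w (congrArg WithLp.ofLp hEq))
  set a : ℝ → ℝ := fun t => ⟪q, v t⟫_ℝ with ha_def
  set R : ℝ → ℝ := fun t => ⟪v t, mulVecE H (v t)⟫_ℝ with hR_def
  -- derivative of a
  have hinner_oja : ∀ t, 0 ≤ t → ⟪q, ojaRHS H (v t)⟫_ℝ = (lam1 - R t) * a t := by
    intro t ht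
    rw [oja_eq, inner_sub_right, real_inner_smul_right,
      inner_mulVec_symm H hsymmT q (v t), hqE, real_inner_smul_left]
    simp only [hR_def, ha_def]
    ring
  have ha' : ∀ t, 0 ≤ t → HasDerivAt a ((lam1 - R t) * a t) t := by
    intro t ht
    have := (hasDerivAt_const t q).inner ℝ (hode t ht)
    simp only [inner_zero_left, add_zero] at this
    simpa [hinner_oja t ht] using this
  set b : ℝ → ℝ := fun t => a t ^ 2 with hb_def
  have hb' : ∀ t, 0 ≤ t → HasDerivAt b (2 * (lam1 - R t) * b t) t := by
    intro t ht
    have := (ha' t ht).fun_pow 2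
    refine this.congr_deriv ?_
    show _ = 2 * (lam1 - R t) * (a t ^ 2)
    ring
  -- basic bounds
  have hb_le1 : ∀ t, 0 ≤ t → b t ≤ 1 := by
    intro t ht
    have h1 : |a t| ≤ 1 := by
      have := abs_real_inner_le_norm q (v t)
      rwa [hq, hnorm t ht, one_mul] at this
    calc b t = |a t| ^ 2 := by simp [hb_def, sq_abs]
    _ ≤ 1 := by nlinarith [abs_nonneg (a t)]
  have hR_le : ∀ t, 0 ≤ t → R t ≤ lam1 := by
    intro t ht
    have := hrayleigh (v t)
    rwa [hnorm t ht, one_pow, mul_one] at this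
  have hb_nonneg : ∀ t, 0 ≤ b t := fun t => sq_nonneg _
  -- gap estimate : lam1 - R t ≥ (lam1 - lam2) * (1 - b t)
  have hgap' : ∀ t, 0 ≤ t → (lam1 - lam2) * (1 - b t) ≤ lam1 - R t := by
    intro t ht
    set w : EuclideanSpace ℝ (Fin d) := v t - a t • q with hw_def
    have hvw : v t = a t • q + w := by rw [hw_def]; abel
    have hqw : ⟪q, w⟫_ℝ = 0 := by
      rw [hw_def, inner_sub_right, real_inner_smul_right, real_inner_self_eq_norm_sq, hq]
      simp [ha_def]
    have hwq : ⟪w, q⟫_ℝ = 0 := by rw [real_inner_comm]; exact hqw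
    have hnw : ‖w‖ ^ 2 = 1 - b t := by
      have : ‖w‖ ^ 2 = ⟪w, w⟫_ℝ := (real_inner_self_eq_norm_sq w).symm
      rw [this, hw_def]
      rw [inner_sub_left, inner_sub_right, inner_sub_right, real_inner_smul_left,
        real_inner_smul_left, real_inner_smul_right, real_inner_smul_right,
        real_inner_self_eq_norm_sq, real_inner_self_eq_norm_sq, hq, hnorm t ht,
        real_inner_comm (v t) q]
      simp only [ha_def, hb_def]
      rw [real_inner_comm (v t) q]
      ring
    have hRdecomp : R t = lam1 * b t + ⟪w, mulVecE H w⟫_ℝ := by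
      rw [hR_def]
      simp only
      rw [hvw, mulVecE_add, mulVecE_smul, hqE]
      simp only [inner_add_left, inner_add_right, real_inner_smul_left,
        real_inner_smul_right]
      rw [inner_mulVec_symm H hsymmT q w, hqE, real_inner_smul_left, hqw, hwq,
        real_inner_self_eq_norm_sq, hq]
      simp only [hb_def]
      ring
    have hwH : ⟪w, mulVecE H w⟫_ℝ ≤ lam2 * (1 - b t) := by
      have := hgap w hqw
      rwa [hnw] at this
    nlinarith [hwH, hRdecomp]
  -- continuity / monotonicity of b
  have hb_cont : ContinuousOn b (Set.Ici (0:ℝ)) :=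
    fun t ht => ((hb' t ht).continuousAt).continuousWithinAt
  have hb_diff : DifferentiableOn ℝ b (interior (Set.Ici (0:ℝ))) := by
    rw [interior_Ici]
    exact fun t ht => ((hb' t (le_of_lt ht)).differentiableAt).differentiableWithinAt
  have hb_deriv : ∀ t : ℝ, 0 < t → deriv b t = 2 * (lam1 - R t) * b t :=
    fun t ht => (hb' t ht.le).deriv
  have hb_mono : MonotoneOn b (Set.Ici (0:ℝ)) := by
    apply monotoneOn_of_deriv_nonneg (convex_Ici 0) hb_cont hb_diff
    intro t ht
    rw [interior_Ici] at ht
    rw [hb_deriv t ht]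
    have h1 := hR_le t ht.le
    have h2 := hb_nonneg t
    nlinarith
  set bb : ℝ → ℝ := fun t => b (max t 0) with hbb
  have hbb_mono : Monotone bb := fun s t hst =>
    hb_mono (Set.mem_Ici.2 (le_max_right _ _)) (Set.mem_Ici.2 (le_max_right _ _))
      (max_le_max hst le_rfl)
  have hbb_bdd : BddAbove (Set.range bb) := by
    refine ⟨1, ?_⟩
    rintro x ⟨t, rfl⟩
    exact hb_le1 _ (le_max_right _ _)
  set L := ⨆ t, bb t with hL
  have hbbL : Tendsto bb atTop (nhds L) := tendsto_atTop_ciSup hbb_mono hbb_bdd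
  have hbeq : bb =ᶠ[atTop] b := by
    filter_upwards [eventually_ge_atTop (0:ℝ)] with t ht
    simp [hbb, max_eq_left ht]
  have hbL : Tendsto b atTop (nhds L) := hbbL.congr' hbeq
  have hleL : ∀ t : ℝ, 0 ≤ t → b t ≤ L := by
    intro t ht
    have h1 : bb t ≤ L := le_ciSup hbb_bdd t
    simpa [hbb, max_eq_left ht] using h1
  have hL_le1 : L ≤ 1 := ciSup_le fun t => hb_le1 _ (le_max_right _ _)
  have hb00 : 0 < b 0 := by
    have : a 0 < 0 := h0neg
    simp only [hb_def]
    nlinarith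
  have hb0_le : ∀ t : ℝ, 0 ≤ t → b 0 ≤ b t := fun t ht =>
    hb_mono Set.self_mem_Ici (Set.mem_Ici.2 ht) ht
  -- L = 1
  have hL1 : L = 1 := by
    by_contra hne
    have hLlt : L < 1 := lt_of_le_of_ne hL_le1 hne
    set c := 2 * (lam1 - lam2) * b 0 * (1 - L) with hc
    have hcpos : 0 < c := by
      have h1 : 0 < lam1 - lam2 := sub_pos.2 hlam2_lt
      have h2 : 0 < 1 - L := sub_pos.2 hLlt
      positivity
    have hf' : ∀ t : ℝ, 0 < t → HasDerivAt (fun s => b s - c * s)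
        (2 * (lam1 - R t) * b t - c) t := by
      intro t ht
      exact (hb' t ht.le).sub (by simpa using (hasDerivAt_id t).const_mul c)
    have hderiv_ge : ∀ t ∈ interior (Set.Ici (0:ℝ)), 0 ≤ deriv (fun s => b s - c * s) t := by
      intro t ht
      rw [interior_Ici] at ht
      rw [(hf' t ht).deriv]
      have hg := hgap' t ht.le
      have h1 := hb0_le t ht.le
      have h2 := hleL t ht.le
      have h3 := hb_nonneg t
      have h4 : 0 < lam1 - lam2 := sub_pos.2 hlam2_lt
      have h5 : 0 ≤ 1 - L := sub_nonneg.2 hL_le1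
      have k1 : (1 - L) * b 0 ≤ (1 - b t) * b t :=
        mul_le_mul (by linarith) h1 hb00.le (by linarith)
      have key := mul_le_mul_of_nonneg_left k1 h4.le
      nlinarith [key, mul_le_mul_of_nonneg_right hg h3]
    have hmono2 : MonotoneOn (fun s => b s - c * s) (Set.Ici (0:ℝ)) := by
      apply monotoneOn_of_deriv_nonneg (convex_Ici 0) ?_ ?_ hderiv_ge
      · exact hb_cont.sub ((continuous_const.mul continuous_id).continuousOn)
      · rw [interior_Ici]
        exact fun t ht => ((hf' t ht).differentiableAt).differentiableWithinAt
    have hT : (0:ℝ) ≤ 1 / c := by positivity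
    have hmt := hmono2 Set.self_mem_Ici (Set.mem_Ici.2 hT) hT
    have hc1 : c * (1 / c) = 1 := by field_simp
    have := hb_le1 (1 / c) hT
    simp only [mul_zero, sub_zero] at hmt
    nlinarith
  rw [hL1] at hbL
  -- a stays negative
  have ha_ne : ∀ t : ℝ, 0 ≤ t → a t ≠ 0 := by
    intro t ht h
    have h1 := hb0_le t ht
    have h2 : b t = 0 := by simp [hb_def, h]
    linarith [hb00]
  have ha_neg : ∀ t : ℝ, 0 ≤ t → a t < 0 := by
    intro t ht
    rcases lt_or_gt_of_ne (ha_ne t ht) with h | h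
    · exact h
    exfalso
    have hcont : ContinuousOn a (Set.Icc 0 t) :=
      fun s hs => ((ha' s hs.1).continuousAt).continuousWithinAt
    have hiv := intermediate_value_Icc ht hcont
    have h0mem : (0:ℝ) ∈ Set.Icc (a 0) (a t) := ⟨h0neg.le, h.le⟩
    obtain ⟨s, hs, has⟩ := hiv h0mem
    exact ha_ne s hs.1 has
  -- a → -1
  have haL : Tendsto a atTop (nhds (-1)) := by
    have h1 : Tendsto (fun t => Real.sqrt (b t)) atTop (nhds (Real.sqrt 1)) :=
      (Real.continuous_sqrt.tendsto 1).comp hbL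
    rw [Real.sqrt_one] at h1
    have h2 := h1.neg
    apply h2.congr'
    filter_upwards [eventually_ge_atTop (0:ℝ)] with t ht
    have : Real.sqrt (b t) = |a t| := Real.sqrt_sq_eq_abs _
    rw [this, abs_of_neg (ha_neg t ht)]
    ring
  -- conclude
  have hfinal : Tendsto (fun t => ‖v t - (-q)‖) atTop (nhds 0) := by
    have h2 : Tendsto (fun t => 2 + 2 * a t) atTop (nhds 0) := by
      have h := (haL.const_mul 2).const_add 2
      rw [show (2:ℝ) + 2 * (-1) = 0 by norm_num] at h
      exact h
    have h3 : Tendsto (fun t => Real.sqrt (2 + 2 * a t)) atTop (nhds 0) := by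
      have h := (Real.continuous_sqrt.tendsto 0).comp h2
      rw [Real.sqrt_zero] at h
      exact h
    apply h3.congr'
    filter_upwards [eventually_ge_atTop (0:ℝ)] with t ht
    rw [sub_neg_eq_add]
    have hsq : ‖v t + q‖ ^ 2 = 2 + 2 * a t := by
      rw [norm_add_sq_real, hnorm t ht, hq]
      have hcomm : ⟪v t, q⟫_ℝ = a t := (real_inner_comm (v t) q).symm
      linarith [hcomm]
    rw [← hsq, Real.sqrt_sq (norm_nonneg _)]
  exact tendsto_iff_norm_sub_tendsto_zero.2 hfinal
end

section
/- Let q ∈ ℝ^d be a unit vector and set H = qqᵀ. Let the index set {1,…,N} be partitioned into two sets 𝒱₁ and 𝒱₂, and for each i let vᵢ : [0,∞) → ℝ^d be differentiable with ‖vᵢ(t)‖ = 1 for all t and satisfy v̇ᵢ(t) = (I − vᵢ(t)vᵢ(t)ᵀ)Hvᵢ(t). If 0 < ⟨q, vᵢ(0)⟩ ≤ 1 for every i ∈ 𝒱₁ and −1 ≤ ⟨q, vⱼ(0)⟩ < 0 for every j ∈ 𝒱₂, then vᵢ(t) → q for every i ∈ 𝒱₁ and vⱼ(t) → −q for every j ∈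 𝒱₂ as t → ∞; in particular the opinions converge to the dissensus configuration {q, −q}. -/
open Matrix Filter
open scoped InnerProductSpace

lemma ojaRHS_eq {d : ℕ} (q x : EuclideanSpace ℝ (Fin d)) :
    ojaRHS (Matrix.vecMulVec q q) x
      = ⟪q, x⟫_ℝ • q - (⟪q, x⟫_ℝ * ⟪q, x⟫_ℝ) • x := by
  ext i
  simp only [ojaRHS, PiLp.toLp_apply, Pi.sub_apply, sub_mul, one_mul, Matrix.sub_mulVec, Matrix.mulVec,
    Matrix.vecMulVec_apply, Matrix.mul_apply, dotProduct, Matrix.sub_apply,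
    Matrix.one_apply, PiLp.sub_apply, PiLp.smul_apply, smul_eq_mul,
    PiLp.inner_apply, RCLike.inner_apply, conj_trivial, sub_mul,
    Finset.sum_sub_distrib, ite_mul, zero_mul, Finset.sum_ite_eq,
    Finset.mem_univ, if_true]
  congr 1
  · rw [Finset.sum_mul]
    exact Finset.sum_congr rfl fun j _ => by ring
  · simp only [Finset.sum_mul, Finset.mul_sum]
    rw [Finset.sum_comm]
    refine Finset.sum_congr rfl fun j _ => Finset.sum_congr rfl fun k _ => by ring

lemma oja_key {d : ℕ} (q : EuclideanSpace ℝ (Fin d)) (hq : ‖q‖ = 1)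
    (v : ℝ → EuclideanSpace ℝ (Fin d))
    (hnorm : ∀ t : ℝ, 0 ≤ t → ‖v t‖ = 1)
    (hode : ∀ t : ℝ, 0 ≤ t →
      HasDerivAt v (ojaRHS (Matrix.vecMulVec q q) (v t)) t)
    (hinit : 0 < ⟪q, v 0⟫_ℝ) :
    Tendsto v atTop (nhds q) := by
  set a : ℝ → ℝ := fun t => ⟪q, v t⟫_ℝ with ha_def
  -- a' = a - a³
  have ha' : ∀ t : ℝ, 0 ≤ t → HasDerivAt a (a t - a t ^ 3) t := by
    intro t ht
    have h := HasDerivAt.inner (𝕜 := ℝ) (hasDerivAt_const t q) (hode t ht)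
    have heq : ⟪q, ojaRHS (Matrix.vecMulVec q q) (v t)⟫_ℝ
        + ⟪(0 : EuclideanSpace ℝ (Fin d)), v t⟫_ℝ = a t - a t ^ 3 := by
      rw [ojaRHS_eq, inner_zero_left, inner_sub_right, real_inner_smul_right,
        real_inner_smul_right, real_inner_self_eq_norm_sq, hq]
      ring
    rw [heq] at h
    exact h
  -- |a| ≤ 1
  have habs : ∀ t : ℝ, 0 ≤ t → a t ^ 2 ≤ 1 := by
    intro t ht
    have h := abs_real_inner_le_norm q (v t)
    rw [hq, hnorm t ht, one_mul] at h
    nlinarith [sq_abs (a t), abs_nonneg (a t)]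
  set b : ℝ → ℝ := fun t => 1 - a t ^ 2 with hb_def
  have hbnn : ∀ t : ℝ, 0 ≤ t → 0 ≤ b t := fun t ht => by
    simp only [hb_def]; linarith [habs t ht]
  have hb' : ∀ t : ℝ, 0 ≤ t → HasDerivAt b (-(2 * a t ^ 2 * b t)) t := by
    intro t ht
    have h : HasDerivAt b _ t := ((ha' t ht).pow 2).const_sub 1
    convert h using 1
    simp only [hb_def]
    push_cast
    ring
  have hconta : ContinuousOn a (Set.Ici 0) :=
    fun t ht => (ha' t ht).continuousAt.continuousWithinAt
  have hcontb : ContinuousOn b (Set.Ici 0) := by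
    apply (continuousOn_const.sub (hconta.pow 2))
  have hIci : interior (Set.Ici (0:ℝ)) = Set.Ioi 0 := interior_Ici
  -- b antitone
  have hbanti : AntitoneOn b (Set.Ici 0) := by
    apply antitoneOn_of_deriv_nonpos (convex_Ici 0) hcontb
    · rw [hIci]
      exact fun x hx => ((hb' x (le_of_lt hx)).differentiableAt).differentiableWithinAt
    · rw [hIci]
      intro x hx
      rw [(hb' x (le_of_lt hx)).deriv]
      have := hbnn x (le_of_lt hx)
      nlinarith [sq_nonneg (a x)]
  set c : ℝ := a 0 with hc_def
  have hc : 0 < c := hinit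
  have hb0 : b 0 = 1 - c ^ 2 := rfl
  have ha2 : ∀ t : ℝ, 0 ≤ t → c ^ 2 ≤ a t ^ 2 := by
    intro t ht
    have := hbanti (Set.self_mem_Ici) ht ht
    simp only [hb_def] at this
    linarith
  -- g = b * exp(2c²t) antitone
  set g : ℝ → ℝ := fun t => b t * Real.exp (2 * c ^ 2 * t) with hg_def
  have hg' : ∀ t : ℝ, 0 ≤ t →
      HasDerivAt g (2 * b t * Real.exp (2 * c ^ 2 * t) * (c ^ 2 - a t ^ 2)) t := by
    intro t ht
    have he : HasDerivAt (fun s : ℝ => Real.exp (2 * c ^ 2 * s))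
        (Real.exp (2 * c ^ 2 * t) * (2 * c ^ 2)) t := by
      have := ((hasDerivAt_id t).const_mul (2 * c ^ 2)).exp
      simpa using this
    have h : HasDerivAt g _ t := (hb' t ht).mul he
    convert h using 1
    simp only [hb_def]
    ring
  have hganti : AntitoneOn g (Set.Ici 0) := by
    have hcontg : ContinuousOn g (Set.Ici 0) :=
      hcontb.mul (Real.continuous_exp.comp (continuous_const.mul continuous_id)).continuousOn
    apply antitoneOn_of_deriv_nonpos (convex_Ici 0) hcontg
    · rw [hIci]
      exact fun x hx => ((hg' x (le_of_lt hx)).differentiableAt).differentiableWithinAt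
    · rw [hIci]
      intro x hx
      rw [(hg' x (le_of_lt hx)).deriv]
      have h1 := hbnn x (le_of_lt hx)
      have h2 := ha2 x (le_of_lt hx)
      have h3 := Real.exp_pos (2 * c ^ 2 * x)
      have h4 := mul_nonneg (mul_nonneg (by linarith : (0:ℝ) ≤ 2 * b x) h3.le)
        (by linarith : (0:ℝ) ≤ a x ^ 2 - c ^ 2)
      nlinarith [h4]
  have hbound : ∀ t : ℝ, 0 ≤ t → b t ≤ b 0 * Real.exp (-(2 * c ^ 2 * t)) := by
    intro t ht
    have h := hganti (Set.self_mem_Ici) ht ht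
    simp only [hg_def, mul_zero, Real.exp_zero, mul_one] at h
    rw [Real.exp_neg, ← div_eq_mul_inv, le_div_iff₀ (Real.exp_pos _)]
    exact h
  -- positivity of a
  have hapos : ∀ t : ℝ, 0 ≤ t → 0 < a t := by
    intro t ht
    by_contra h
    push_neg at h
    have hne : a t ≠ 0 := by
      intro h0
      have := ha2 t ht
      rw [h0] at this
      nlinarith
    have hlt : a t < 0 := lt_of_le_of_ne h hne
    have hIVT := intermediate_value_Icc' ht (hconta.mono (Set.Icc_subset_Ici_self))
    have h0mem : (0:ℝ) ∈ Set.Icc (a t) (a 0) := ⟨le_of_lt hlt, le_of_lt hinit⟩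
    obtain ⟨s, hs, has⟩ := hIVT h0mem
    have := ha2 s hs.1
    rw [has] at this
    nlinarith
  -- norm bound
  have hnb : ∀ t : ℝ, 0 ≤ t → ‖v t - q‖ ^ 2 ≤ 2 * (b 0 * Real.exp (-(2 * c ^ 2 * t))) := by
    intro t ht
    have h1 : ‖v t - q‖ ^ 2 = 2 - 2 * a t := by
      rw [norm_sub_sq_real, hnorm t ht, hq, real_inner_comm]
      simp only [ha_def]
      ring
    have h2 : a t ≤ 1 := by nlinarith [habs t ht]
    have h3 := hapos t ht
    have h4 : 2 - 2 * a t ≤ 2 * b t := by simp only [hb_def]; nlinarith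
    have h5 := hbound t ht
    linarith
  -- limit
  have hexp : Tendsto (fun t : ℝ => 2 * (b 0 * Real.exp (-(2 * c ^ 2 * t)))) atTop (nhds 0) := by
    have h1 : Tendsto (fun t : ℝ => 2 * c ^ 2 * t) atTop atTop :=
      Tendsto.const_mul_atTop (by positivity) tendsto_id
    have h2 : Tendsto (fun t : ℝ => -(2 * c ^ 2 * t)) atTop atBot :=
      tendsto_neg_atBot_iff.mpr h1
    have h3 := Real.tendsto_exp_atBot.comp h2
    have h4 := h3.const_mul (2 * b 0)
    simpa [mul_assoc, mul_comm, mul_left_comm] using h4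
  have hsq : Tendsto (fun t : ℝ => ‖v t - q‖ ^ 2) atTop (nhds 0) := by
    apply squeeze_zero' (Eventually.of_forall fun t => by positivity)
      ((eventually_ge_atTop (0:ℝ)).mono fun t ht => hnb t ht) hexp
  have hnrm : Tendsto (fun t : ℝ => ‖v t - q‖) atTop (nhds 0) := by
    have h := (Real.continuous_sqrt.tendsto 0).comp hsq
    simp only [Function.comp_def, Real.sqrt_zero] at h
    convert h using 2 with t
    rw [Real.sqrt_sq (norm_nonneg _)]
  exact tendsto_iff_norm_sub_tendsto_zero.mpr hnrm

lemma neg_vecMulVec_neg {d : ℕ} (q : EuclideanSpace ℝ (Fin d)) :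
    Matrix.vecMulVec (-q : EuclideanSpace ℝ (Fin d)) (-q) = Matrix.vecMulVec q q := by
  funext i j
  simp only [Matrix.vecMulVec_apply, PiLp.neg_apply, neg_mul_neg]


/-- For `H = q qᵀ` with `q` a unit vector, agents whose initial opinion has
positive inner product with `q` converge to `q`, and those with negative inner
product converge to `-q`: the group reaches the dissensus configuration
`{q, -q}`. -/
theorem stmt5 {d N : ℕ} (q : EuclideanSpace ℝ (Fin d)) (hq : ‖q‖ = 1)
    (H : Matrix (Fin d) (Fin d) ℝ) (hH : H = Matrix.vecMulVec q q)
    (V1 V2 : Finset (Fin N)) (hne1 : V1.Nonempty) (hne2 : V2.Nonempty)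
    (hdisj : Disjoint V1 V2) (hunion : V1 ∪ V2 = Finset.univ)
    (v : Fin N → ℝ → EuclideanSpace ℝ (Fin d))
    (hnorm : ∀ i : Fin N, ∀ t : ℝ, 0 ≤ t → ‖v i t‖ = 1)
    (hode : ∀ i : Fin N, ∀ t : ℝ, 0 ≤ t → HasDerivAt (v i) (ojaRHS H (v i t)) t)
    (hinit1 : ∀ i ∈ V1, 0 < ⟪q, v i 0⟫_ℝ ∧ ⟪q, v i 0⟫_ℝ ≤ 1)
    (hinit2 : ∀ j ∈ V2, -1 ≤ ⟪q, v j 0⟫_ℝ ∧ ⟪q, v j 0⟫_ℝ < 0) :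
    (∀ i ∈ V1, Tendsto (v i) atTop (nhds q)) ∧
      (∀ j ∈ V2, Tendsto (v j) atTop (nhds (-q))) := by
  subst hH
  constructor
  · intro i hi
    exact oja_key q hq (v i) (hnorm i) (hode i) (hinit1 i hi).1
  · intro j hj
    have hode' : ∀ t : ℝ, 0 ≤ t →
        HasDerivAt (v j) (ojaRHS (Matrix.vecMulVec (-q) (-q)) (v j t)) t := by
      rw [show Matrix.vecMulVec (-q.ofLp) (-q.ofLp) = Matrix.vecMulVec q.ofLp q.ofLp from by
        simp only [Matrix.vecMulVec_neg, Matrix.neg_vecMulVec, neg_neg]]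
      exact hode j
    have hinit' : 0 < ⟪-q, v j 0⟫_ℝ := by
      rw [inner_neg_left]
      linarith [(hinit2 j hj).2]
    exact oja_key (-q) (by rw [norm_neg, hq]) (v j) (hnorm j) hode' hinit'
end

section
/- Let s ∈ ℝ^d be a unit vector, let {1,…,N} be partitioned into nonempty disjoint sets 𝒱₁ and 𝒱₂, set vᵢ = s for i ∈ 𝒱₁ and vⱼ = −s for j ∈ 𝒱₂, and let p = |𝒱₁| − |𝒱₂|. Evaluate the linearization matrix A_k = C + ⟨v_k − v̄, v_k⟩ I − (v_k − v̄)v_kᵀ − ⟨v_k, Cv_k⟩ I − 2v_kv_kᵀC + 2v_kv_kᵀ(v_k − v̄)v_kᵀ at this dissensus configuration, where v̄ = (p/N)s and C = ((N² − p²)/N)ssᵀ. Then A_i = −m_i(ssᵀ + I) with m_i = (N² − p²)/N − (1 − p/N) for every i ∈ 𝒱₁, and A_j = −m_j(ssᵀ + I) with m_j = (N² − p²)/N − (1 + p/N) for every j ∈ 𝒱₂; moreover m_k > 0 for every k, so A_k is negative definite for every agent k. Hence the linearized PCA opinion dynamics is asymptotically stable at the dissensus equilibrium. -/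
open Matrix Finset

private lemma vmv_mulVec {d : ℕ} (a b x : Fin d → ℝ) :
    Matrix.vecMulVec a b *ᵥ x = (b ⬝ᵥ x) • a := by
  ext i
  simp only [Matrix.mulVec, Matrix.vecMulVec_apply, dotProduct, Pi.smul_apply, smul_eq_mul,
    Finset.sum_mul, Finset.mul_sum]
  exact Finset.sum_congr rfl fun k _ => by ring

private lemma vmv_mul_vmv {d : ℕ} (a b c e : Fin d → ℝ) :
    Matrix.vecMulVec a b * Matrix.vecMulVec c e = (b ⬝ᵥ c) • Matrix.vecMulVec a e := by
  ext i j
  simp only [Matrix.mul_apply, Matrix.vecMulVec_apply, Matrix.smul_apply, dotProduct,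
    smul_eq_mul, Finset.sum_mul]
  exact Finset.sum_congr rfl fun k _ => by ring

private lemma smul_vmv {d : ℕ} (r : ℝ) (a b : Fin d → ℝ) :
    Matrix.vecMulVec (r • a) b = r • Matrix.vecMulVec a b := by
  ext i j; simp [Matrix.vecMulVec_apply]; ring

private lemma vmv_smul {d : ℕ} (r : ℝ) (a b : Fin d → ℝ) :
    Matrix.vecMulVec a (r • b) = r • Matrix.vecMulVec a b := by
  ext i j; simp [Matrix.vecMulVec_apply]; ring

private lemma key {d : ℕ} (s : Fin d → ℝ) (hss : s ⬝ᵥ s = 1) (ε β c : ℝ) (hε : ε * ε = 1) :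
    (c • Matrix.vecMulVec s s)
      + (((ε • s - β • s) : Fin d → ℝ) ⬝ᵥ (ε • s)) • (1 : Matrix (Fin d) (Fin d) ℝ)
      - Matrix.vecMulVec ((ε • s - β • s) : Fin d → ℝ) (ε • s)
      - ((ε • s) ⬝ᵥ ((c • Matrix.vecMulVec s s) *ᵥ (ε • s))) • (1 : Matrix (Fin d) (Fin d) ℝ)
      - 2 • (Matrix.vecMulVec (ε • s) (ε • s) * (c • Matrix.vecMulVec s s))
      + 2 • (Matrix.vecMulVec (ε • s) (ε • s)
          * Matrix.vecMulVec ((ε • s - β • s) : Fin d → ℝ) (ε • s))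
    = ((ε - β) * ε - c) • (Matrix.vecMulVec s s + 1) := by
  have hsub : (ε • s - β • s : Fin d → ℝ) = (ε - β) • s := (sub_smul ε β s).symm
  rw [hsub]
  have h1 : ((ε - β) • s) ⬝ᵥ (ε • s) = (ε - β) * ε := by
    rw [smul_dotProduct, dotProduct_smul, hss]; simp
  have h2 : (c • Matrix.vecMulVec s s) *ᵥ (ε • s) = (c * ε) • s := by
    rw [Matrix.smul_mulVec, Matrix.mulVec_smul, vmv_mulVec, hss, one_smul, smul_smul]
  have h3 : (ε • s) ⬝ᵥ ((c * ε) • s) = c := by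
    rw [smul_dotProduct, dotProduct_smul, hss]
    simp only [smul_eq_mul, mul_one]
    calc ε * (c * ε) = c * (ε * ε) := by ring
    _ = c := by rw [hε]; ring
  have h4 : Matrix.vecMulVec (ε • s) (ε • s) = Matrix.vecMulVec s s := by
    rw [smul_vmv, vmv_smul, smul_smul, hε, one_smul]
  have h5 : Matrix.vecMulVec ((ε - β) • s) (ε • s)
      = ((ε - β) * ε) • Matrix.vecMulVec s s := by
    rw [smul_vmv, vmv_smul, smul_smul]
  have hm : (ε - β) * ε = 1 - β * ε := by rw [sub_mul, hε]
  rw [h1, h2, h3, h4, h5, hm, Matrix.mul_smul, Matrix.mul_smul, vmv_mul_vmv, hss, one_smul]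
  module


/-- At the dissensus configuration (agents in `𝒱₁` at `s`, agents in `𝒱₂` at
`-s`, `p = |𝒱₁| - |𝒱₂|`, `v̄ = (p/N)s`, `C = ((N²-p²)/N)ssᵀ`), the
linearization matrix `A_k` of the PCA opinion dynamics equals
`-m_k (ssᵀ + I)` with `m_i = (N²-p²)/N - (1 - p/N)` for `i ∈ 𝒱₁` and
`m_j = (N²-p²)/N - (1 + p/N)` for `j ∈ 𝒱₂`; each `m_k > 0`, so every `A_k` is
negative definite and the linearized dynamics is asymptotically stable at the
dissensus equilibrium. -/
theorem stmt12 {d N : ℕ} (s : EuclideanSpace ℝ (Fin d)) (hs : ‖s‖ = 1)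
    (V1 V2 : Finset (Fin N)) (hne1 : V1.Nonempty) (hne2 : V2.Nonempty)
    (hdisj : Disjoint V1 V2) (hunion : V1 ∪ V2 = Finset.univ)
    (v : Fin N → EuclideanSpace ℝ (Fin d))
    (hv1 : ∀ i ∈ V1, v i = s) (hv2 : ∀ j ∈ V2, v j = -s)
    (p : ℝ) (hp : p = (V1.card : ℝ) - (V2.card : ℝ))
    (vbar : EuclideanSpace ℝ (Fin d)) (hvbar : vbar = (p / N) • s)
    (C : Matrix (Fin d) (Fin d) ℝ)
    (hC : C = (((N : ℝ) ^ 2 - p ^ 2) / N) • Matrix.vecMulVec s s)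
    (A : Fin N → Matrix (Fin d) (Fin d) ℝ)
    (hA : ∀ k : Fin N,
      A k = C + ((v k - vbar) ⬝ᵥ v k) • (1 : Matrix (Fin d) (Fin d) ℝ)
        - Matrix.vecMulVec (v k - vbar) (v k)
        - (v k ⬝ᵥ (C *ᵥ v k)) • (1 : Matrix (Fin d) (Fin d) ℝ)
        - 2 • (Matrix.vecMulVec (v k) (v k) * C)
        + 2 • (Matrix.vecMulVec (v k) (v k) * Matrix.vecMulVec (v k - vbar) (v k))) :
    (∀ i ∈ V1,
      A i = (-(((N : ℝ) ^ 2 - p ^ 2) / N - (1 - p / N))) • (Matrix.vecMulVec s s + 1) ∧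
      0 < ((N : ℝ) ^ 2 - p ^ 2) / N - (1 - p / N)) ∧
    (∀ j ∈ V2,
      A j = (-(((N : ℝ) ^ 2 - p ^ 2) / N - (1 + p / N))) • (Matrix.vecMulVec s s + 1) ∧
      0 < ((N : ℝ) ^ 2 - p ^ 2) / N - (1 + p / N)) ∧
    (∀ k : Fin N, ∀ x : Fin d → ℝ, x ≠ 0 → x ⬝ᵥ (A k *ᵥ x) < 0) := by
  -- s ⬝ᵥ s = 1
  have hss : (s : Fin d → ℝ) ⬝ᵥ (s : Fin d → ℝ) = 1 := by
    have h : (inner ℝ s s : ℝ) = 1 := by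
      rw [real_inner_self_eq_norm_sq, hs]; norm_num
    simp only [PiLp.inner_apply, RCLike.inner_apply, conj_trivial] at h
    simpa [PiLp.inner_apply, RCLike.inner_apply, dotProduct, mul_comm] using h
  -- cardinalities
  have hcard : V1.card + V2.card = N := by
    rw [← Finset.card_union_of_disjoint hdisj, hunion, Finset.card_univ, Fintype.card_fin]
  set a : ℝ := (V1.card : ℝ) with ha_def
  set b : ℝ := (V2.card : ℝ) with hb_def
  have ha : 1 ≤ a := by
    have h := Finset.card_pos.mpr hne1
    rw [ha_def]; exact_mod_cast h
  have hb : 1 ≤ b := by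
    have h := Finset.card_pos.mpr hne2
    rw [hb_def]; exact_mod_cast h
  have hN : (N : ℝ) = a + b := by
    rw [← hcard]; push_cast; ring
  have hNpos : (0 : ℝ) < N := by rw [hN]; linarith
  have hNne : (N : ℝ) ≠ 0 := ne_of_gt hNpos
  set c : ℝ := ((N : ℝ) ^ 2 - p ^ 2) / N with hc_def
  -- positivity of the two m's
  have hm1 : 0 < c - (1 - p / N) := by
    have heq : c - (1 - p / N) = (2 * b * (2 * a - 1)) / (a + b) := by
      rw [hc_def, hp, hN]
      have hab : a + b ≠ 0 := by positivity
      field_simp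
      ring
    rw [heq]
    apply div_pos (by nlinarith) (by linarith)
  have hm2 : 0 < c - (1 + p / N) := by
    have heq : c - (1 + p / N) = (2 * a * (2 * b - 1)) / (a + b) := by
      rw [hc_def, hp, hN]
      have hab : a + b ≠ 0 := by positivity
      field_simp
      ring
    rw [heq]
    apply div_pos (by nlinarith) (by linarith)
  -- A on V1
  have hA1 : ∀ i ∈ V1,
      A i = (-(c - (1 - p / N))) • (Matrix.vecMulVec s s + 1) := by
    intro i hi
    have hvi : v i = (1 : ℝ) • (s : Fin d → ℝ) := by rw [hv1 i hi, one_smul]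
    have hk := key (s : Fin d → ℝ) hss 1 (p / N) c (by norm_num)
    rw [hA i, WithLp.ofLp_sub, hvi, hvbar, WithLp.ofLp_smul, hC]
    rw [show ((1:ℝ) - p / N) * 1 - c = -(c - (1 - p / N)) by ring] at hk
    exact hk
  -- A on V2
  have hA2 : ∀ j ∈ V2,
      A j = (-(c - (1 + p / N))) • (Matrix.vecMulVec s s + 1) := by
    intro j hj
    have hvj : v j = (-1 : ℝ) • (s : Fin d → ℝ) := by
      rw [hv2 j hj]; ext k; simp
    have hk := key (s : Fin d → ℝ) hss (-1) (p / N) c (by norm_num)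
    rw [hA j, WithLp.ofLp_sub, hvj, hvbar, WithLp.ofLp_smul, hC]
    rw [show ((-1:ℝ) - p / N) * (-1) - c = -(c - (1 + p / N)) by ring] at hk
    exact hk
  refine ⟨fun i hi => ⟨hA1 i hi, hm1⟩, fun j hj => ⟨hA2 j hj, hm2⟩, ?_⟩
  -- negative definiteness
  intro k x hx
  have hxx : 0 < x ⬝ᵥ x := by
    rcases (dotProduct_self_eq_zero (v := x)).not.mpr hx with h
    have hnn : 0 ≤ x ⬝ᵥ x := Finset.sum_nonneg fun i _ => mul_self_nonneg (x i)
    exact lt_of_le_of_ne hnn (Ne.symm h)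
  have hquad : ∀ m : ℝ, 0 < m →
      x ⬝ᵥ (((-m) • (Matrix.vecMulVec (s : Fin d → ℝ) s + 1)) *ᵥ x) < 0 := by
    intro m hm
    rw [Matrix.smul_mulVec, Matrix.add_mulVec, Matrix.one_mulVec, vmv_mulVec,
      dotProduct_smul, dotProduct_add, dotProduct_smul]
    have hsx : x ⬝ᵥ (s : Fin d → ℝ) = (s : Fin d → ℝ) ⬝ᵥ x := dotProduct_comm x s
    rw [hsx]
    simp only [smul_eq_mul]
    nlinarith [sq_nonneg ((s : Fin d → ℝ) ⬝ᵥ x)]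
  have hk : k ∈ V1 ∪ V2 := by rw [hunion]; exact Finset.mem_univ k
  rcases Finset.mem_union.mp hk with h1 | h2
  · rw [hA1 k h1]; exact hquad _ hm1
  · rw [hA2 k h2]; exact hquad _ hm2
end

section
/- Let v₁, v₂ : [0,∞) → ℝ^d be continuously differentiable with ‖v₁(t)‖ = ‖v₂(t)‖ = 1 for all t, satisfying the 2-agent PCA dynamics v̇ᵢ = (I − vᵢvᵢᵀ)Cvᵢ with C = (1/2)(v₁ − v₂)(v₁ − v₂)ᵀ. If ⟨v₁(0), v₂(0)⟩ < 1, then ⟨v₁(t), v₂(t)⟩ → −1 as t → ∞; equivalently ‖v₁(t) + v₂(t)‖ → 0, so the opinions converge to the antipodal (dissensus) equilibrium v₁ = −v₂, which is asymptotically stable. -/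
open Matrix Filter
open scoped InnerProductSpace

lemma myVMV {d : ℕ} (w v x : Fin d → ℝ) :
    Matrix.vecMulVec w v *ᵥ x = (v ⬝ᵥ x) • w := by
  ext i
  simp [Matrix.mulVec, Matrix.vecMulVec_apply, dotProduct, Finset.sum_mul, Finset.mul_sum]
  ring_nf

lemma innerDot {d : ℕ} (x y : EuclideanSpace ℝ (Fin d)) : ⟪x, y⟫_ℝ = (x : Fin d → ℝ) ⬝ᵥ y := by
  simp [PiLp.inner_apply, dotProduct]
  exact Finset.sum_congr rfl fun i _ => mul_comm _ _

lemma oja_formula {d : ℕ} (u x : EuclideanSpace ℝ (Fin d)) :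
    ojaRHS ((1/2 : ℝ) • Matrix.vecMulVec u u) x
      = ((1/2 : ℝ) * ((u : Fin d → ℝ) ⬝ᵥ x)) • u
        - ((1/2 : ℝ) * ((u : Fin d → ℝ) ⬝ᵥ x) * ((u : Fin d → ℝ) ⬝ᵥ x)) • x := by
  apply WithLp.ofLp_injective 2
  show ((1 - Matrix.vecMulVec (x : Fin d → ℝ) x) * ((1/2 : ℝ) • Matrix.vecMulVec u u)) *ᵥ x = _
  rw [Matrix.sub_mul, Matrix.one_mul, Matrix.sub_mulVec, ← Matrix.mulVec_mulVec,
    Matrix.smul_mulVec, myVMV, Matrix.mulVec_smul, Matrix.mulVec_smul, myVMV,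
    dotProduct_comm (x : Fin d → ℝ) u, WithLp.ofLp_sub, WithLp.ofLp_smul, WithLp.ofLp_smul]
  module


lemma oja_dot {d : ℕ} (u x y : EuclideanSpace ℝ (Fin d)) :
    (ojaRHS ((1/2 : ℝ) • Matrix.vecMulVec u u) x : Fin d → ℝ) ⬝ᵥ (y : Fin d → ℝ)
      = 1/2 * ((u : Fin d → ℝ) ⬝ᵥ x) * ((u : Fin d → ℝ) ⬝ᵥ y)
        - 1/2 * ((u : Fin d → ℝ) ⬝ᵥ x) * ((u : Fin d → ℝ) ⬝ᵥ x) * ((x : Fin d → ℝ) ⬝ᵥ y) := by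
  rw [oja_formula]
  show (((1/2 : ℝ) * ((u : Fin d → ℝ) ⬝ᵥ x)) • (u : Fin d → ℝ)
      - ((1/2 : ℝ) * ((u : Fin d → ℝ) ⬝ᵥ x) * ((u : Fin d → ℝ) ⬝ᵥ x)) • (x : Fin d → ℝ)) ⬝ᵥ y = _
  rw [sub_dotProduct, smul_dotProduct, smul_dotProduct, smul_eq_mul, smul_eq_mul]

lemma sub_dot {d : ℕ} (a b c : EuclideanSpace ℝ (Fin d)) :
    ((a - b : EuclideanSpace ℝ (Fin d)) : Fin d → ℝ) ⬝ᵥ (c : Fin d → ℝ)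
      = (a : Fin d → ℝ) ⬝ᵥ c - (b : Fin d → ℝ) ⬝ᵥ c := sub_dotProduct a b c

/-- For the 2-agent PCA dynamics with `C = (1/2)(v₁-v₂)(v₁-v₂)ᵀ`, if
`⟨v₁(0), v₂(0)⟩ < 1` then `⟨v₁(t), v₂(t)⟩ → -1` and `‖v₁(t) + v₂(t)‖ → 0`:
the opinions converge to the antipodal (dissensus) equilibrium `v₁ = -v₂`. -/
theorem stmt15 {d : ℕ} (v1 v2 : ℝ → EuclideanSpace ℝ (Fin d))
    (hn1 : ∀ t : ℝ, 0 ≤ t → ‖v1 t‖ = 1) (hn2 : ∀ t : ℝ, 0 ≤ t → ‖v2 t‖ = 1)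
    (C : ℝ → Matrix (Fin d) (Fin d) ℝ)
    (hC : ∀ t : ℝ, C t = (1 / 2 : ℝ) • Matrix.vecMulVec (v1 t - v2 t) (v1 t - v2 t))
    (hode1 : ∀ t : ℝ, 0 ≤ t → HasDerivAt v1 (ojaRHS (C t) (v1 t)) t)
    (hode2 : ∀ t : ℝ, 0 ≤ t → HasDerivAt v2 (ojaRHS (C t) (v2 t)) t)
    (h0 : ⟪v1 0, v2 0⟫_ℝ < 1) :
    Tendsto (fun t => ⟪v1 t, v2 t⟫_ℝ) atTop (nhds (-1)) ∧
    Tendsto (fun t => ‖v1 t + v2 t‖) atTop (nhds 0) := by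
  set S : ℝ → ℝ := fun t => ⟪v1 t, v2 t⟫_ℝ with hS
  -- derivative of S
  have key : ∀ t : ℝ, 0 ≤ t → HasDerivAt S (-(1 - S t)^2 * (1 + S t)) t := by
    intro t ht
    have h := HasDerivAt.inner ℝ (hode1 t ht) (hode2 t ht)
    have ha : (v1 t : Fin d → ℝ) ⬝ᵥ v1 t = 1 := by
      have := real_inner_self_eq_norm_sq (v1 t)
      rw [hn1 t ht] at this
      rw [← innerDot]; simpa using this
    have hb : (v2 t : Fin d → ℝ) ⬝ᵥ v2 t = 1 := by
      have := real_inner_self_eq_norm_sq (v2 t)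
      rw [hn2 t ht] at this
      rw [← innerDot]; simpa using this
    have hSd : S t = (v1 t : Fin d → ℝ) ⬝ᵥ v2 t := innerDot _ _
    have hcomm : (v2 t : Fin d → ℝ) ⬝ᵥ v1 t = (v1 t : Fin d → ℝ) ⬝ᵥ v2 t :=
      dotProduct_comm _ _
    refine h.congr_deriv ?_
    rw [innerDot, innerDot, hC]
    rw [dotProduct_comm ((v1 t : Fin d → ℝ))]
    rw [oja_dot, oja_dot]
    simp only [sub_dot, ha, hb, hcomm]
    rw [hSd]
    ring
  have hcontS : ContinuousOn S (Set.Ici (0 : ℝ)) := fun t ht =>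
    ((key t ht).continuousAt).continuousWithinAt
  have hdiffS : DifferentiableOn ℝ S (interior (Set.Ici (0 : ℝ))) := by
    rw [interior_Ici]
    exact fun t ht => ((key t (le_of_lt ht)).differentiableAt).differentiableWithinAt
  have hSub : ∀ t : ℝ, 0 ≤ t → S t ≤ 1 := by
    intro t ht
    calc S t ≤ ‖v1 t‖ * ‖v2 t‖ := real_inner_le_norm _ _
    _ = 1 := by rw [hn1 t ht, hn2 t ht]; ring
  have hSlb : ∀ t : ℝ, 0 ≤ t → -1 ≤ S t := by
    intro t ht
    have := abs_real_inner_le_norm (v1 t) (v2 t)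
    rw [hn1 t ht, hn2 t ht] at this
    have := neg_le_of_abs_le this
    simpa using this
  have hanti : AntitoneOn S (Set.Ici (0 : ℝ)) := by
    apply antitoneOn_of_deriv_nonpos (convex_Ici 0) hcontS hdiffS
    intro t ht
    rw [interior_Ici] at ht
    rw [(key t (le_of_lt ht)).deriv]
    have h1 : (0:ℝ) ≤ (1 - S t)^2 := sq_nonneg _
    have h2 : (0:ℝ) ≤ 1 + S t := by linarith [hSlb t (le_of_lt ht)]
    nlinarith
  -- the shifted function S (max t 0) is antitone everywhere
  set T : ℝ → ℝ := fun t => S (max t 0) with hT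
  have hTanti : Antitone T := by
    intro a b hab
    exact hanti (le_max_right a 0) (le_max_right b 0) (max_le_max hab le_rfl)
  have hTbdd : BddBelow (Set.range T) := by
    refine ⟨-1, ?_⟩
    rintro x ⟨t, rfl⟩
    exact hSlb _ (le_max_right t 0)
  have hTlim : Tendsto T atTop (nhds (⨅ t, T t)) := tendsto_atTop_ciInf hTanti hTbdd
  set L : ℝ := ⨅ t, T t with hL
  have hEq : S =ᶠ[atTop] T := by
    filter_upwards [eventually_ge_atTop (0:ℝ)] with t ht
    simp [hT, max_eq_left ht]
  have hSlim : Tendsto S atTop (nhds L) := hTlim.congr' hEq.symm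
  have hLlb : -1 ≤ L := le_ciInf fun t => hSlb _ (le_max_right t 0)
  have hTS : ∀ t : ℝ, 0 ≤ t → T t = S t := fun t ht => by simp [hT, max_eq_left ht]
  have hLleS : ∀ t : ℝ, 0 ≤ t → L ≤ S t := by
    intro t ht
    rw [← hTS t ht]
    exact ciInf_le hTbdd t
  have hS0 : S 0 < 1 := h0
  -- L = -1
  have hLeq : L = -1 := by
    by_contra hne
    have hLgt : -1 < L := lt_of_le_of_ne hLlb (Ne.symm hne)
    set c : ℝ := (1 - S 0)^2 * (1 + L) with hc
    have hcpos : 0 < c := by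
      apply mul_pos
      · exact pow_pos (by linarith) 2
      · linarith
    -- derivative bound: S' t ≤ -c for t ≥ 0
    have hderivle : ∀ t : ℝ, 0 ≤ t → -(1 - S t)^2 * (1 + S t) ≤ -c := by
      intro t ht
      have h1 : S t ≤ S 0 := hanti Set.self_mem_Ici ht ht
      have h2 : L ≤ S t := hLleS t ht
      have h3 : 0 < 1 - S 0 := by linarith
      have h4 : (1 - S 0)^2 ≤ (1 - S t)^2 := by nlinarith
      have h5 : 0 < 1 + S t := by linarith
      rw [hc]
      nlinarith
    set g : ℝ → ℝ := fun t => S t + c * t with hg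
    have hgderiv : ∀ t : ℝ, 0 ≤ t →
        HasDerivAt g (-(1 - S t)^2 * (1 + S t) + c) t :=
      fun t ht => (key t ht).add (by simpa using (hasDerivAt_id t).const_mul c)
    have hganti : AntitoneOn g (Set.Ici (0 : ℝ)) := by
      apply antitoneOn_of_deriv_nonpos (convex_Ici 0)
      · exact fun t ht => ((hgderiv t ht).continuousAt).continuousWithinAt
      · rw [interior_Ici]
        exact fun t ht => ((hgderiv t (le_of_lt ht)).differentiableAt).differentiableWithinAt
      · intro t ht
        rw [interior_Ici] at ht
        rw [(hgderiv t (le_of_lt ht)).deriv]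
        linarith [hderivle t (le_of_lt ht)]
    set t₀ : ℝ := (S 0 + 2) / c with ht₀
    have ht₀pos : 0 ≤ t₀ := by
      apply div_nonneg _ (le_of_lt hcpos)
      linarith [hSlb 0 le_rfl]
    have hgle : g t₀ ≤ g 0 := hganti Set.self_mem_Ici ht₀pos ht₀pos
    have : S t₀ + (S 0 + 2) ≤ S 0 := by
      have hct₀ : c * t₀ = S 0 + 2 := by
        rw [ht₀]; field_simp
      rw [hg] at hgle
      simp only at hgle
      rw [hct₀] at hgle
      linarith [hgle]
    linarith [hSlb t₀ ht₀pos]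
  rw [hLeq] at hSlim
  refine ⟨hSlim, ?_⟩
  have hsqrt : Tendsto (fun t => Real.sqrt (2 + 2 * S t)) atTop (nhds 0) := by
    have h1 : Tendsto (fun t => 2 + 2 * S t) atTop (nhds 0) := by
      have := (hSlim.const_mul 2).const_add 2
      simpa using this
    have := (Real.continuous_sqrt.tendsto 0).comp h1
    simpa [Function.comp_def] using this
  apply hsqrt.congr'
  filter_upwards [eventually_ge_atTop (0:ℝ)] with t ht
  have hnq : ‖v1 t + v2 t‖^2 = 2 + 2 * S t := by
    rw [norm_add_sq_real, hn1 t ht, hn2 t ht]; ring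
  rw [← hnq, Real.sqrt_sq (norm_nonneg _)]
end
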